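/- For fixed s ∈ ℂ, the affine cubic surface a₁a₂a₃ + a₁ − a₂ + a₃ + s = 0 in ℂ³ is singular if and only if s = ±2; for s = 2 the unique singular point is (−1, 1, −1) and for s = −2 it is (1, −1, 1), and both singularities are of type A₁. -/

import Mathlib

open MvPolynomial

/-- The family of cubic surfaces `a₁a₂a₃ + a₁ − a₂ + a₃ + s = 0`
(monodromy spaces for the Flaschka–Newell Painlevé II family (0,−,3/2)). -/
noncomputable def cubicPIIFN (s : ℂ) : MvPolynomial (Fin 3) ℂ :=
  X 0 * X 1 * X 2 + X 0 - X 1 + X 2 + C s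

/-- A singular point of the affine surface `F = 0`. -/
def SingPt (F : MvPolynomial (Fin 3) ℂ) (p : Fin 3 → ℂ) : Prop :=
  eval p F = 0 ∧ ∀ i : Fin 3, eval p (pderiv i F) = 0

/-- Type `A₁`: nondegenerate Hessian. -/
def IsA1 (F : MvPolynomial (Fin 3) ℂ) (p : Fin 3 → ℂ) : Prop :=
  (Matrix.of fun i j : Fin 3 => eval p (pderiv i (pderiv j F))).det ≠ 0

lemma sing_iff (s : ℂ) (p : Fin 3 → ℂ) :
    SingPt (cubicPIIFN s) p ↔
      (p 0 * p 1 * p 2 + p 0 - p 1 + p 2 + s = 0 ∧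
       p 1 * p 2 + 1 = 0 ∧ p 0 * p 2 - 1 = 0 ∧ p 0 * p 1 + 1 = 0) := by
  constructor
  · rintro ⟨h0, hg⟩
    have h1 := hg 0; have h2 := hg 1; have h3 := hg 2
    simp [cubicPIIFN, pderiv_mul] at h0 h1 h2 h3
    refine ⟨by linear_combination h0, by linear_combination h1, by linear_combination h2,
      by linear_combination h3⟩
  · rintro ⟨h0, h1, h2, h3⟩
    refine ⟨by simp [cubicPIIFN]; linear_combination h0, ?_⟩
    intro i
    fin_cases i <;> simp [cubicPIIFN, pderiv_mul] <;>
      [linear_combination h1; linear_combination h2; linear_combination h3]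

lemma sing_sol (s : ℂ) (p : Fin 3 → ℂ) (h : SingPt (cubicPIIFN s) p) :
    (s = 2 ∧ p = ![-1,1,-1]) ∨ (s = -2 ∧ p = ![1,-1,1]) := by
  rw [sing_iff] at h
  obtain ⟨h0, h1, h2, h3⟩ := h
  have ht : (p 0 * p 1 * p 2) * (p 0 * p 1 * p 2) = 1 := by
    linear_combination (p 0 * p 1) * (p 0 * p 2) * h1 - (p 0 * p 1) * h2 - h3
  rcases mul_self_eq_one_iff.mp ht with ht1 | ht1
  · left
    have hb : p 1 = 1 := by linear_combination ht1 - p 1 * h2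
    have ha : p 0 = -1 := by linear_combination h3 - p 0 * hb
    have hc : p 2 = -1 := by linear_combination h1 - p 2 * hb
    refine ⟨by linear_combination h0 - ht1 - ha + hb - hc, ?_⟩
    funext i; fin_cases i
    · simpa using ha
    · simpa using hb
    · simpa using hc
  · right
    have hb : p 1 = -1 := by linear_combination ht1 - p 1 * h2
    have ha : p 0 = 1 := by linear_combination p 0 * hb - h3
    have hc : p 2 = 1 := by linear_combination p 2 * hb - h1
    refine ⟨by linear_combination h0 - ht1 - ha + hb - hc, ?_⟩
    funext i; fin_cases i
    · simpa using ha
    · simpa using hb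
    · simpa using hc

lemma sing2 : SingPt (cubicPIIFN 2) ![-1,1,-1] := by
  rw [sing_iff]; norm_num [Matrix.cons_val_two, Matrix.vecHead, Matrix.vecTail]

lemma singm2 : SingPt (cubicPIIFN (-2)) ![1,-1,1] := by
  rw [sing_iff]; norm_num [Matrix.cons_val_two, Matrix.vecHead, Matrix.vecTail]

/-- For fixed `s ∈ ℂ`, the surface `a₁a₂a₃ + a₁ − a₂ + a₃ + s = 0` is singular iff
`s = ±2`; for `s = 2` the unique singular point is `(−1,1,−1)`, for `s = −2` it is
`(1,−1,1)`, and both are of type `A₁`. -/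
theorem stmt_7 (s : ℂ) :
    ((∃ p, SingPt (cubicPIIFN s) p) ↔ (s = 2 ∨ s = -2)) ∧
    (s = 2 →
      (∀ p, SingPt (cubicPIIFN s) p ↔ p = ![-1, 1, -1]) ∧
      IsA1 (cubicPIIFN s) ![-1, 1, -1]) ∧
    (s = -2 →
      (∀ p, SingPt (cubicPIIFN s) p ↔ p = ![1, -1, 1]) ∧
      IsA1 (cubicPIIFN s) ![1, -1, 1]) := by
  refine ⟨⟨?_, ?_⟩, ?_, ?_⟩
  · rintro ⟨p, hp⟩
    rcases sing_sol s p hp with ⟨h, -⟩ | ⟨h, -⟩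
    · exact Or.inl h
    · exact Or.inr h
  · rintro (rfl | rfl)
    · exact ⟨_, sing2⟩
    · exact ⟨_, singm2⟩
  · rintro rfl
    constructor
    · intro p
      constructor
      · intro hp
        rcases sing_sol 2 p hp with ⟨-, h⟩ | ⟨h, -⟩
        · exact h
        · exact absurd h (by norm_num)
      · rintro rfl; exact sing2
    · unfold IsA1
      rw [Matrix.det_fin_three]
      simp [cubicPIIFN, pderiv_mul]
  · rintro rfl
    constructor
    · intro p
      constructor
      · intro hp
        rcases sing_sol (-2) p hp with ⟨h, -⟩ | ⟨-, h⟩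
        · exact absurd h (by norm_num)
        · exact h
      · rintro rfl; exact singm2
    · unfold IsA1
      rw [Matrix.det_fin_three]
      simp [cubicPIIFN, pderiv_mul]
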